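/- If g:S^M→ℝ is a bounded concave function on the standard probability simplex S^M, then the function Tg is also bounded and concave on S^M. -/

import Mathlib

open MeasureTheory Finset Filter
open scoped ENNReal

noncomputable section

/-- The analytic data of the change-diagnosis problem: a σ-finite reference measure `m`
on the observation space, probability densities `f₀, …, f_M`, the geometric parameter
`p ∈ (0,1)`, the prior `ν` on the change index, the delay cost `c > 0` and the
terminal-decision costs `a_{ij}` (with `a_{ii} = 0`). -/
structure DiagSetup (E : Type*) [MeasurableSpace E] (M : ℕ) : Type _ where
  /-- σ-finite reference measure -/
  m : Measure E
  hm : SigmaFinite m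
  /-- `f 0` is the pre-change density, `f i.succ` the post-change densities -/
  f : Fin (M + 1) → E → ℝ
  hf_meas : ∀ i, Measurable (f i)
  hf_nonneg : ∀ i x, 0 ≤ f i x
  hf_int : ∀ i, ∫ x, f i x ∂m = 1
  p : ℝ
  hp : p ∈ Set.Ioo (0 : ℝ) 1
  ν : Fin M → ℝ
  hν : ∀ i, 0 < ν i
  hνsum : ∑ i, ν i = 1
  c : ℝ
  hc : 0 < c
  a : Fin (M + 1) → Fin M → ℝ
  ha : ∀ i j, 0 ≤ a i j
  haii : ∀ i : Fin M, a i.succ i = 0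
  hM : 1 ≤ M

namespace DiagSetup

variable {E : Type*} [MeasurableSpace E] {M : ℕ}

/-- `D_i(π, x)`:  `D₀(π,x) = (1-p)π₀f₀(x)` and `D_i(π,x) = (π_i + π₀ p ν_i) f_i(x)`. -/
def D (S : DiagSetup E M) (i : Fin (M + 1)) (π : Fin (M + 1) → ℝ) (x : E) : ℝ :=
  Fin.cases ((1 - S.p) * π 0 * S.f 0 x)
    (fun j => (π j.succ + π 0 * S.p * S.ν j) * S.f j.succ x) i

/-- `D(π, x) = Σ_{i=0}^M D_i(π, x)`. -/
def Dsum (S : DiagSetup E M) (π : Fin (M + 1) → ℝ) (x : E) : ℝ :=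
  ∑ i, S.D i π x

/-- The operator `T`:
`(Tg)(π) = ∫_E D(π,x) g(D₀(π,x)/D(π,x), …, D_M(π,x)/D(π,x)) m(dx)`,
with the integrand interpreted as `0` where `D(π,x) = 0`. -/
def T (S : DiagSetup E M) (g : (Fin (M + 1) → ℝ) → ℝ) (π : Fin (M + 1) → ℝ) : ℝ :=
  ∫ x, (if S.Dsum π x = 0 then 0
        else S.Dsum π x * g fun i => S.D i π x / S.Dsum π x) ∂S.m

/-- `h_j(π) = Σ_{i=0}^M π_i a_{ij}`. -/
def hj (S : DiagSetup E M) (j : Fin M) (π : Fin (M + 1) → ℝ) : ℝ :=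
  ∑ i : Fin (M + 1), π i * S.a i j

/-- `h(π) = min_{j∈{1,…,M}} h_j(π)`. -/
def hmin (S : DiagSetup E M) (π : Fin (M + 1) → ℝ) : ℝ :=
  ⨅ j : Fin M, S.hj j π

/-- The dynamic-programming operator `(𝕄g)(π) = min{h(π), c(1-π₀) + (Tg)(π)}`. -/
def Mop (S : DiagSetup E M) (g : (Fin (M + 1) → ℝ) → ℝ) (π : Fin (M + 1) → ℝ) : ℝ :=
  min (S.hmin π) (S.c * (1 - π 0) + S.T g π)

/-- `V^N = 𝕄^N h`, the value functions of the truncated problems. -/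
def V (S : DiagSetup E M) (N : ℕ) : (Fin (M + 1) → ℝ) → ℝ :=
  S.Mop^[N] S.hmin

end DiagSetup

namespace DiagSetup

variable {E : Type*} [MeasurableSpace E] {M : ℕ} (S : DiagSetup E M)

/-- coefficient so that `D i π x = coef π i * f i x` -/
def coef (π : Fin (M + 1) → ℝ) : Fin (M + 1) → ℝ :=
  Fin.cases ((1 - S.p) * π 0) (fun j => π j.succ + π 0 * S.p * S.ν j)

lemma D_eq (i : Fin (M + 1)) (π : Fin (M + 1) → ℝ) (x : E) :
    S.D i π x = S.coef π i * S.f i x := by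
  induction i using Fin.cases with
  | zero => simp [D, coef]
  | succ j => simp [D, coef]

lemma coef_nonneg {π : Fin (M + 1) → ℝ} (hπ : ∀ i, 0 ≤ π i) (i : Fin (M + 1)) :
    0 ≤ S.coef π i := by
  induction i using Fin.cases with
  | zero =>
    simp only [coef, Fin.cases_zero]
    exact mul_nonneg (by linarith [S.hp.2]) (hπ 0)
  | succ j =>
    simp only [coef, Fin.cases_succ]
    have := mul_nonneg (mul_nonneg (hπ 0) S.hp.1.le) (S.hν j).le
    linarith [hπ j.succ]

lemma D_nonneg {π : Fin (M + 1) → ℝ} (hπ : ∀ i, 0 ≤ π i) (i : Fin (M + 1)) (x : E) :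
    0 ≤ S.D i π x := by
  rw [D_eq]
  exact mul_nonneg (S.coef_nonneg hπ i) (S.hf_nonneg i x)

lemma Dsum_nonneg {π : Fin (M + 1) → ℝ} (hπ : ∀ i, 0 ≤ π i) (x : E) :
    0 ≤ S.Dsum π x :=
  Finset.sum_nonneg fun i _ => S.D_nonneg hπ i x

lemma coef_sum {π : Fin (M + 1) → ℝ} : ∑ i, S.coef π i = ∑ i, π i := by
  rw [Fin.sum_univ_succ (f := S.coef π), Fin.sum_univ_succ (f := π)]
  simp only [coef, Fin.cases_zero, Fin.cases_succ]
  rw [Finset.sum_add_distrib]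
  have h : ∑ j : Fin M, π 0 * S.p * S.ν j = π 0 * S.p := by
    rw [← Finset.mul_sum, S.hνsum, mul_one]
  rw [h]; ring

lemma D_linear (i : Fin (M + 1)) (x : E) (a b : ℝ) (π π' : Fin (M + 1) → ℝ) :
    S.D i (a • π + b • π') x = a * S.D i π x + b * S.D i π' x := by
  induction i using Fin.cases with
  | zero => simp [D, Pi.add_apply, Pi.smul_apply, smul_eq_mul]; ring
  | succ j => simp [D, Pi.add_apply, Pi.smul_apply, smul_eq_mul]; ring

lemma Dsum_linear (x : E) (a b : ℝ) (π π' : Fin (M + 1) → ℝ) :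
    S.Dsum (a • π + b • π') x = a * S.Dsum π x + b * S.Dsum π' x := by
  simp only [Dsum, D_linear, Finset.sum_add_distrib, Finset.mul_sum]

lemma D_measurable (i : Fin (M + 1)) (π : Fin (M + 1) → ℝ) :
    Measurable (S.D i π) := by
  have : S.D i π = fun x => S.coef π i * S.f i x := funext fun x => S.D_eq i π x
  rw [this]
  exact (S.hf_meas i).const_mul _

lemma Dsum_measurable (π : Fin (M + 1) → ℝ) : Measurable (S.Dsum π) :=
  Finset.measurable_sum _ fun i _ => S.D_measurable i π

lemma f_integrable (i : Fin (M + 1)) : Integrable (S.f i) S.m := by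
  by_contra h
  have := S.hf_int i
  rw [integral_undef h] at this
  norm_num at this

lemma D_integrable (i : Fin (M + 1)) (π : Fin (M + 1) → ℝ) :
    Integrable (S.D i π) S.m := by
  have : S.D i π = fun x => S.coef π i * S.f i x := funext fun x => S.D_eq i π x
  rw [this]
  exact (S.f_integrable i).const_mul _

lemma Dsum_integrable (π : Fin (M + 1) → ℝ) : Integrable (S.Dsum π) S.m :=
  integrable_finset_sum _ fun i _ => S.D_integrable i π

lemma Dsum_integral {π : Fin (M + 1) → ℝ} (hπ : ∑ i, π i = 1) :
    ∫ x, S.Dsum π x ∂S.m = 1 := by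
  have : ∫ x, S.Dsum π x ∂S.m = ∑ i, ∫ x, S.D i π x ∂S.m :=
    integral_finset_sum _ fun i _ => S.D_integrable i π
  rw [this]
  have h2 : ∀ i, ∫ x, S.D i π x ∂S.m = S.coef π i := by
    intro i
    have : (fun x => S.D i π x) = fun x => S.coef π i * S.f i x :=
      funext fun x => S.D_eq i π x
    rw [this, integral_const_mul, S.hf_int i, mul_one]
  simp_rw [h2, S.coef_sum, hπ]

/-- the integrand of `T g`. -/
def intg (g : (Fin (M + 1) → ℝ) → ℝ) (π : Fin (M + 1) → ℝ) (x : E) : ℝ :=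
  if S.Dsum π x = 0 then 0
  else S.Dsum π x * g fun i => S.D i π x / S.Dsum π x

lemma T_eq (g : (Fin (M + 1) → ℝ) → ℝ) (π : Fin (M + 1) → ℝ) :
    S.T g π = ∫ x, S.intg g π x ∂S.m := rfl

lemma ratio_mem {π : Fin (M + 1) → ℝ} (hπ : ∀ i, 0 ≤ π i) {x : E}
    (h : S.Dsum π x ≠ 0) :
    (fun i => S.D i π x / S.Dsum π x) ∈ stdSimplex ℝ (Fin (M + 1)) := by
  have hpos : 0 < S.Dsum π x := lt_of_le_of_ne (S.Dsum_nonneg hπ x) (Ne.symm h)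
  refine ⟨fun i => div_nonneg (S.D_nonneg hπ i x) hpos.le, ?_⟩
  rw [← Finset.sum_div]
  exact div_self h

lemma intg_abs_le {g : (Fin (M + 1) → ℝ) → ℝ} {C : ℝ} (hC : 0 ≤ C)
    (hg : ∀ π ∈ stdSimplex ℝ (Fin (M + 1)), |g π| ≤ C)
    {π : Fin (M + 1) → ℝ} (hπ : ∀ i, 0 ≤ π i) (x : E) :
    |S.intg g π x| ≤ C * S.Dsum π x := by
  unfold intg
  by_cases h : S.Dsum π x = 0
  · simp [h]
  · rw [if_neg h]
    have hpos : 0 < S.Dsum π x := lt_of_le_of_ne (S.Dsum_nonneg hπ x) (Ne.symm h)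
    rw [abs_mul, abs_of_pos hpos, mul_comm]
    exact mul_le_mul_of_nonneg_right (hg _ (S.ratio_mem hπ h)) hpos.le

lemma intg_measurable {g : (Fin (M + 1) → ℝ) → ℝ} (hg : Measurable g)
    (π : Fin (M + 1) → ℝ) : Measurable (S.intg g π) := by
  unfold intg
  refine Measurable.ite (measurableSet_eq_fun (S.Dsum_measurable π) measurable_const)
    measurable_const ?_
  exact (S.Dsum_measurable π).mul
    (hg.comp (measurable_pi_lambda _ fun i =>
      (S.D_measurable i π).div (S.Dsum_measurable π)))

lemma intg_integrable {g : (Fin (M + 1) → ℝ) → ℝ} (hg : Measurable g)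
    {C : ℝ} (hC : 0 ≤ C)
    (hgb : ∀ π ∈ stdSimplex ℝ (Fin (M + 1)), |g π| ≤ C)
    {π : Fin (M + 1) → ℝ} (hπ : ∀ i, 0 ≤ π i) :
    Integrable (S.intg g π) S.m := by
  refine Integrable.mono' ((S.Dsum_integrable π).const_mul C)
    (S.intg_measurable hg π).aestronglyMeasurable ?_
  filter_upwards with x
  rw [Real.norm_eq_abs]
  exact S.intg_abs_le hC hgb hπ x

/-- pointwise super-additivity of the integrand (perspective-function concavity). -/
lemma intg_concave_pt {g : (Fin (M + 1) → ℝ) → ℝ}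
    (hg : ConcaveOn ℝ (stdSimplex ℝ (Fin (M + 1))) g)
    {π π' : Fin (M + 1) → ℝ} (hπ : ∀ i, 0 ≤ π i) (hπ' : ∀ i, 0 ≤ π' i)
    {a b : ℝ} (ha : 0 ≤ a) (hb : 0 ≤ b) (hab : a + b = 1) (x : E) :
    a * S.intg g π x + b * S.intg g π' x ≤ S.intg g (a • π + b • π') x := by
  have hu0 : 0 ≤ S.Dsum π x := S.Dsum_nonneg hπ x
  have hv0 : 0 ≤ S.Dsum π' x := S.Dsum_nonneg hπ' x
  have hw : S.Dsum (a • π + b • π') x = a * S.Dsum π x + b * S.Dsum π' x :=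
    S.Dsum_linear x a b π π'
  have hDzero : ∀ {σ : Fin (M+1) → ℝ}, (∀ i, 0 ≤ σ i) → S.Dsum σ x = 0 →
      ∀ i, S.D i σ x = 0 := by
    intro σ hσ h0 i
    exact (Finset.sum_eq_zero_iff_of_nonneg
      (fun j _ => S.D_nonneg hσ j x)).mp h0 i (Finset.mem_univ i)
  by_cases hu : S.Dsum π x = 0
  · have hπ0 : S.intg g π x = 0 := by simp [intg, hu]
    rw [hπ0, mul_zero, zero_add]
    by_cases hb0 : b = 0
    · have hD0 : S.Dsum (a • π + b • π') x = 0 := by rw [hw, hu, hb0]; ring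
      have h0 : S.intg g (a • π + b • π') x = 0 := by
        simp only [intg]; rw [if_pos hD0]
      rw [h0, hb0, zero_mul]
    by_cases hv : S.Dsum π' x = 0
    · have hπ'0 : S.intg g π' x = 0 := by simp [intg, hv]
      have hD0 : S.Dsum (a • π + b • π') x = 0 := by rw [hw, hu, hv]; ring
      have h0 : S.intg g (a • π + b • π') x = 0 := by
        simp only [intg]; rw [if_pos hD0]
      rw [h0, hπ'0, mul_zero]
    · have hwv : S.Dsum (a • π + b • π') x = b * S.Dsum π' x := by
        rw [hw, hu]; ring
      have hwne : S.Dsum (a • π + b • π') x ≠ 0 := by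
        rw [hwv]; exact mul_ne_zero hb0 hv
      have hratio : (fun i => S.D i (a • π + b • π') x / S.Dsum (a • π + b • π') x)
          = fun i => S.D i π' x / S.Dsum π' x := by
        funext i
        rw [S.D_linear, hDzero hπ hu i, mul_zero, zero_add, hwv,
          mul_div_mul_left _ _ hb0]
      have heq : S.intg g (a • π + b • π') x = b * S.intg g π' x := by
        simp only [intg]
        rw [if_neg hwne, if_neg hv, hratio, hwv, mul_assoc]
      exact heq.ge
  by_cases hv : S.Dsum π' x = 0
  · have hπ'0 : S.intg g π' x = 0 := by simp [intg, hv]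
    rw [hπ'0, mul_zero, add_zero]
    by_cases ha0 : a = 0
    · have hD0 : S.Dsum (a • π + b • π') x = 0 := by rw [hw, hv, ha0]; ring
      have h0 : S.intg g (a • π + b • π') x = 0 := by
        simp only [intg]; rw [if_pos hD0]
      rw [h0, ha0, zero_mul]
    · have hwu : S.Dsum (a • π + b • π') x = a * S.Dsum π x := by
        rw [hw, hv]; ring
      have hwne : S.Dsum (a • π + b • π') x ≠ 0 := by
        rw [hwu]; exact mul_ne_zero ha0 hu
      have hratio : (fun i => S.D i (a • π + b • π') x / S.Dsum (a • π + b • π') x)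
          = fun i => S.D i π x / S.Dsum π x := by
        funext i
        rw [S.D_linear, hDzero hπ' hv i, mul_zero, add_zero, hwu,
          mul_div_mul_left _ _ ha0]
      have heq : S.intg g (a • π + b • π') x = a * S.intg g π x := by
        simp only [intg]
        rw [if_neg hwne, if_neg hu, hratio, hwu, mul_assoc]
      exact heq.ge
  · -- main case: both sums positive
    have hupos : 0 < S.Dsum π x := lt_of_le_of_ne hu0 (Ne.symm hu)
    have hvpos : 0 < S.Dsum π' x := lt_of_le_of_ne hv0 (Ne.symm hv)
    have hwpos : 0 < a * S.Dsum π x + b * S.Dsum π' x := by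
      rcases ha.lt_or_eq with hA | hA
      · have h1 : 0 < a * S.Dsum π x := mul_pos hA hupos
        nlinarith [mul_nonneg hb hv0]
      · have hb1 : b = 1 := by linarith
        rw [← hA, hb1]; simpa using hvpos
    have hW : a * S.Dsum π x + b * S.Dsum π' x ≠ 0 := hwpos.ne'
    have hwne : S.Dsum (a • π + b • π') x ≠ 0 := by rw [hw]; exact hW
    have hq : (fun i => S.D i π x / S.Dsum π x) ∈ stdSimplex ℝ (Fin (M + 1)) :=
      S.ratio_mem hπ hu
    have hq' : (fun i => S.D i π' x / S.Dsum π' x) ∈ stdSimplex ℝ (Fin (M + 1)) :=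
      S.ratio_mem hπ' hv
    have hα : (0:ℝ) ≤ a * S.Dsum π x / (a * S.Dsum π x + b * S.Dsum π' x) := by
      positivity
    have hβ : (0:ℝ) ≤ b * S.Dsum π' x / (a * S.Dsum π x + b * S.Dsum π' x) := by
      positivity
    have hαβ : a * S.Dsum π x / (a * S.Dsum π x + b * S.Dsum π' x)
        + b * S.Dsum π' x / (a * S.Dsum π x + b * S.Dsum π' x) = 1 := by
      rw [← add_div, div_self hW]
    have hcc := hg.2 hq hq' hα hβ hαβ
    have hratio : (fun i => S.D i (a • π + b • π') x / S.Dsum (a • π + b • π') x)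
        = (a * S.Dsum π x / (a * S.Dsum π x + b * S.Dsum π' x))
            • (fun i => S.D i π x / S.Dsum π x)
          + (b * S.Dsum π' x / (a * S.Dsum π x + b * S.Dsum π' x))
            • (fun i => S.D i π' x / S.Dsum π' x) := by
      funext i
      simp only [Pi.add_apply, Pi.smul_apply, smul_eq_mul]
      rw [S.D_linear, hw]
      field_simp
    simp only [intg]
    rw [if_neg hwne, if_neg hu, if_neg hv, hratio, hw]
    calc a * (S.Dsum π x * g fun i => S.D i π x / S.Dsum π x)
          + b * (S.Dsum π' x * g fun i => S.D i π' x / S.Dsum π' x)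
        = (a * S.Dsum π x + b * S.Dsum π' x) *
            ((a * S.Dsum π x / (a * S.Dsum π x + b * S.Dsum π' x))
              • g (fun i => S.D i π x / S.Dsum π x)
            + (b * S.Dsum π' x / (a * S.Dsum π x + b * S.Dsum π' x))
              • g (fun i => S.D i π' x / S.Dsum π' x)) := by
          simp only [smul_eq_mul]
          field_simp
      _ ≤ (a * S.Dsum π x + b * S.Dsum π' x) *
            g ((a * S.Dsum π x / (a * S.Dsum π x + b * S.Dsum π' x))
                • (fun i => S.D i π x / S.Dsum π x)
              + (b * S.Dsum π' x / (a * S.Dsum π x + b * S.Dsum π' x))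
                • (fun i => S.D i π' x / S.Dsum π' x)) :=
          mul_le_mul_of_nonneg_left hcc hwpos.le

end DiagSetup

/-- if `g : S^M → ℝ` is bounded and concave on the standard probability
simplex, then so is `Tg`. -/
theorem T_preserves_bounded_concave {E : Type*} [MeasurableSpace E] {M : ℕ}
    (S : DiagSetup E M) (g : (Fin (M + 1) → ℝ) → ℝ) (hg_meas : Measurable g)
    (hg_bdd : ∃ C, ∀ π ∈ stdSimplex ℝ (Fin (M + 1)), |g π| ≤ C)
    (hg_concave : ConcaveOn ℝ (stdSimplex ℝ (Fin (M + 1))) g) :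
    (∃ C, ∀ π ∈ stdSimplex ℝ (Fin (M + 1)), |S.T g π| ≤ C) ∧
    ConcaveOn ℝ (stdSimplex ℝ (Fin (M + 1))) (S.T g) := by
  obtain ⟨C, hC⟩ := hg_bdd
  -- replace C by a nonnegative bound
  set C' : ℝ := max C 0 with hC'def
  have hC'0 : 0 ≤ C' := le_max_right _ _
  have hC' : ∀ π ∈ stdSimplex ℝ (Fin (M + 1)), |g π| ≤ C' :=
    fun π hπ => (hC π hπ).trans (le_max_left _ _)
  constructor
  · refine ⟨C', fun π hπ => ?_⟩
    rw [S.T_eq]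
    calc |∫ x, S.intg g π x ∂S.m| ≤ ∫ x, |S.intg g π x| ∂S.m := by
          simpa [Real.norm_eq_abs] using
            norm_integral_le_integral_norm (μ := S.m) (fun x => S.intg g π x)
      _ ≤ ∫ x, C' * S.Dsum π x ∂S.m := by
          refine integral_mono ((S.intg_integrable hg_meas hC'0 hC' hπ.1).abs) ?_ ?_
          · exact (S.Dsum_integrable π).const_mul C'
          · intro x
            exact S.intg_abs_le hC'0 hC' hπ.1 x
      _ = C' := by rw [integral_const_mul, S.Dsum_integral hπ.2, mul_one]
  · refine ⟨convex_stdSimplex ℝ _, fun π hπ π' hπ' a b ha hb hab => ?_⟩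
    have hmem : a • π + b • π' ∈ stdSimplex ℝ (Fin (M + 1)) :=
      (convex_stdSimplex ℝ _) hπ hπ' ha hb hab
    simp only [smul_eq_mul]
    rw [S.T_eq, S.T_eq, S.T_eq]
    calc a * ∫ x, S.intg g π x ∂S.m + b * ∫ x, S.intg g π' x ∂S.m
        = ∫ x, (a * S.intg g π x + b * S.intg g π' x) ∂S.m := by
          rw [integral_add ((S.intg_integrable hg_meas hC'0 hC' hπ.1).const_mul a)
                ((S.intg_integrable hg_meas hC'0 hC' hπ'.1).const_mul b),
              integral_const_mul, integral_const_mul]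
      _ ≤ ∫ x, S.intg g (a • π + b • π') x ∂S.m := by
          refine integral_mono
            (((S.intg_integrable hg_meas hC'0 hC' hπ.1).const_mul a).add
              ((S.intg_integrable hg_meas hC'0 hC' hπ'.1).const_mul b))
            (S.intg_integrable hg_meas hC'0 hC' hmem.1) ?_
          intro x
          exact S.intg_concave_pt hg_concave hπ.1 hπ'.1 ha hb hab x
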